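/- arXiv:1709.08281 — 6 statements merged into one kernel-verified Lean document; each statement's English description precedes it below -/
import Mathlib

section
/- Let I be a nonempty finite index set with a distinguished element i0 ∈ I. The map sending p = (p_i)_{i ∈ I} ∈ (0,1)^I to ((p_i/p_{i0})_{i ∈ I, i ≠ i0}, ∏_{i ∈ I} p_i/(1 − p_i)) is a bijection from (0,1)^I onto (0,∞)^{I∖{i0}} × (0,∞). -/
open Set Finset Filter Topology

lemma odds_le_odds {x y : ℝ} (hx : 0 < x) (hy : y < 1) (hxy : x ≤ y) :
    x / (1 - x) ≤ y / (1 - y) := by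
  have h1 : 0 < 1 - y := by linarith
  have h2 : 0 < 1 - x := by linarith
  rw [div_le_div_iff₀ h2 h1]; nlinarith

lemma odds_lt_odds {x y : ℝ} (hx : 0 < x) (hy : y < 1) (hxy : x < y) :
    x / (1 - x) < y / (1 - y) := by
  have h1 : 0 < 1 - y := by linarith
  have h2 : 0 < 1 - x := by linarith
  rw [div_lt_div_iff₀ h2 h1]; nlinarith

lemma F_lt_F {I : Type*} [Fintype I] [Nonempty I] (R : I → ℝ) {s s' : ℝ}
    (hR : ∀ i, 0 < R i)
    (hs : ∀ i, R i * s ∈ Set.Ioo (0:ℝ) 1) (hs' : ∀ i, R i * s' ∈ Set.Ioo (0:ℝ) 1)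
    (h : s < s') :
    ∏ i, (R i * s) / (1 - R i * s) < ∏ i, (R i * s') / (1 - R i * s') := by
  refine Finset.prod_lt_prod_of_nonempty (fun i _ => ?_) (fun i _ => ?_) Finset.univ_nonempty
  · exact div_pos (hs i).1 (by linarith [(hs i).2])
  · exact odds_lt_odds (hs i).1 (hs' i).2 (by nlinarith [hR i])

lemma key_exists {I : Type*} [Fintype I] [Nonempty I] (R : I → ℝ) (hR : ∀ i, 0 < R i)
    {t : ℝ} (ht : 0 < t) :
    ∃ s : ℝ, (∀ i, R i * s ∈ Set.Ioo (0:ℝ) 1) ∧ ∏ i, (R i * s) / (1 - R i * s) = t := by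
  classical
  set M : ℝ := Finset.univ.sup' Finset.univ_nonempty R with hMdef
  obtain ⟨i₀, -, hi₀⟩ := Finset.exists_mem_eq_sup' Finset.univ_nonempty R
  have hRM : ∀ i, R i ≤ M := fun i => Finset.le_sup' R (Finset.mem_univ i)
  have hM : 0 < M := lt_of_lt_of_le (hR i₀) (hRM i₀)
  set m : ℝ := M⁻¹ with hmdef
  have hm : 0 < m := inv_pos.2 hM
  have hMm : M * m = 1 := mul_inv_cancel₀ hM.ne'
  -- membership
  have hmem : ∀ s ∈ Set.Ioo (0:ℝ) m, ∀ i, R i * s ∈ Set.Ioo (0:ℝ) 1 := by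
    intro s hs i
    refine ⟨mul_pos (hR i) hs.1, ?_⟩
    calc R i * s ≤ M * s := by nlinarith [hRM i, hs.1]
      _ < M * m := by nlinarith [hs.2]
      _ = 1 := hMm
  set f : I → ℝ → ℝ := fun i s => (R i * s) / (1 - R i * s) with hfdef
  have hfpos : ∀ s ∈ Set.Ioo (0:ℝ) m, ∀ i, 0 < f i s := by
    intro s hs i
    have := hmem s hs i
    exact div_pos this.1 (by linarith [this.2])
  have hhalf : m / 2 ∈ Set.Ioo (0:ℝ) m := ⟨by linarith, by linarith⟩
  set c : ℝ := ∏ i ∈ Finset.univ.erase i₀, f i (m/2) with hcdef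
  have hc : 0 < c :=
    Finset.prod_pos fun i _ => hfpos _ hhalf i
  set T : ℝ := max (t / c) 0 with hTdef
  have hT0 : 0 ≤ T := le_max_right _ _
  have hTt : t / c ≤ T := le_max_left _ _
  set s₂ : ℝ := m * (T + 1/2) / (T + 1) with hs₂def
  have hT1 : (0:ℝ) < T + 1 := by linarith
  have hs₂mem : s₂ ∈ Set.Ioo (0:ℝ) m := by
    constructor
    · apply div_pos (by nlinarith) hT1
    · rw [div_lt_iff₀ hT1]; nlinarith
  have hs₂half : m / 2 ≤ s₂ := by
    rw [le_div_iff₀ hT1]; nlinarith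
  -- value of the i₀ factor at s₂
  have hRi₀ : R i₀ = M := hi₀.symm
  have h1 : R i₀ * s₂ = (T + 1/2) / (T + 1) := by
    rw [hRi₀, hs₂def, hmdef]
    field_simp
  have hfi₀ : f i₀ s₂ = 2 * T + 1 := by
    have hd : 1 - R i₀ * s₂ ≠ 0 := by
      have := (hmem _ hs₂mem i₀).2; intro h; linarith
    simp only [hfdef]
    rw [div_eq_iff hd, h1]
    field_simp
    ring
  have hFs₂ : t < ∏ i, f i s₂ := by
    rw [← Finset.mul_prod_erase Finset.univ (fun i => f i s₂) (Finset.mem_univ i₀)]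
    have h1 : c ≤ ∏ i ∈ Finset.univ.erase i₀, f i s₂ := by
      refine Finset.prod_le_prod (fun i _ => le_of_lt (hfpos _ hhalf i)) (fun i _ => ?_)
      rcases eq_or_lt_of_le hs₂half with h | h
      · rw [← h]
      · exact le_of_lt (odds_lt_odds (hmem _ hhalf i).1 (hmem _ hs₂mem i).2
          (by nlinarith [hR i]))
    have h2 : t / c < f i₀ s₂ := by rw [hfi₀]; linarith
    have h3 : t < f i₀ s₂ * c := by
      rw [div_lt_iff₀ hc] at h2; linarith
    calc t < f i₀ s₂ * c := h3
      _ ≤ f i₀ s₂ * ∏ i ∈ Finset.univ.erase i₀, f i s₂ := by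
          have := hfpos _ hs₂mem i₀; nlinarith
  -- small s₁ with F s₁ < t
  have htend : Filter.Tendsto (fun s => ∏ i, f i s) (𝓝[Set.Ioo (0:ℝ) s₂] 0) (𝓝 0) := by
    have : Filter.Tendsto (fun s => ∏ i, f i s) (𝓝 (0:ℝ)) (𝓝 (∏ i : I, (0:ℝ))) := by
      apply tendsto_finset_prod
      intro i _
      have : ContinuousAt (f i) 0 := by
        apply ContinuousAt.div
        · fun_prop
        · fun_prop
        · simp
      simpa [hfdef] using this.tendsto
    rw [Finset.prod_const, zero_pow (Finset.card_ne_zero_of_mem (Finset.mem_univ (Classical.arbitrary I)))] at this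
    exact this.mono_left nhdsWithin_le_nhds
  have hne : (𝓝[Set.Ioo (0:ℝ) s₂] 0).NeBot := by
    apply IsGLB.nhdsWithin_neBot
    · exact isGLB_Ioo hs₂mem.1
    · exact Set.nonempty_Ioo.2 hs₂mem.1
  have hev : ∀ᶠ s in 𝓝[Set.Ioo (0:ℝ) s₂] 0, (∏ i, f i s) < t ∧ s ∈ Set.Ioo (0:ℝ) s₂ := by
    filter_upwards [htend.eventually (eventually_lt_nhds ht), self_mem_nhdsWithin] with s h1 h2
    exact ⟨h1, h2⟩
  obtain ⟨s₁, hFs₁, hs₁mem⟩ := hev.exists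
  -- IVT on [s₁, s₂]
  have hsub : Set.Icc s₁ s₂ ⊆ Set.Ioo 0 m :=
    fun s hs => ⟨lt_of_lt_of_le hs₁mem.1 hs.1, lt_of_le_of_lt hs.2 hs₂mem.2⟩
  have hcont : ContinuousOn (fun s => ∏ i, f i s) (Set.Icc s₁ s₂) := by
    apply continuousOn_finset_prod
    intro i _
    apply ContinuousOn.div (by fun_prop) (by fun_prop)
    intro s hs
    have := (hmem s (hsub hs) i).2
    intro h; linarith [h]
  have := intermediate_value_Ioo (le_of_lt hs₁mem.2) hcont
  have ht' : t ∈ Set.Ioo ((fun s => ∏ i, f i s) s₁) ((fun s => ∏ i, f i s) s₂) := ⟨hFs₁, hFs₂⟩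
  obtain ⟨s, hsmem, hFs⟩ := this ht'
  exact ⟨s, hmem s (hsub ⟨le_of_lt hsmem.1, le_of_lt hsmem.2⟩), hFs⟩


/-- For a nonempty finite index set `I` with distinguished element `i0`,
the map sending `p ∈ (0,1)^I` to the ratios `p i / p i0` (for `i ≠ i0`) together with the
generalized odds product `∏ i, p i / (1 - p i)` is a bijection from `(0,1)^I` onto
`(0,∞)^{I \ {i0}} × (0,∞)`. -/
theorem stmt_1 {I : Type*} [Fintype I] [Nonempty I] (i0 : I) :
    Set.BijOn
      (fun p : I → ℝ =>
        ((fun i : {i : I // i ≠ i0} => p i / p i0, ∏ i : I, p i / (1 - p i)) :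
          ({i : I // i ≠ i0} → ℝ) × ℝ))
      {p : I → ℝ | ∀ i, p i ∈ Set.Ioo (0 : ℝ) 1}
      {q : ({i : I // i ≠ i0} → ℝ) × ℝ | (∀ i, 0 < q.1 i) ∧ 0 < q.2} := by
  classical
  refine ⟨?_, ?_, ?_⟩
  · -- MapsTo
    intro p hp
    exact ⟨fun i => div_pos (hp i).1 (hp i0).1,
      Finset.prod_pos fun i _ => div_pos (hp i).1 (by linarith [(hp i).2])⟩
  · -- InjOn
    intro p hp q hq h
    simp only [Prod.mk.injEq] at h
    obtain ⟨h1, h2⟩ := h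
    have h1' : ∀ i : {i : I // i ≠ i0}, p i / p i0 = q i / q i0 := fun i => congrFun h1 i
    have hp0 := (hp i0).1
    have hq0 := (hq i0).1
    set R : I → ℝ := fun i => p i / p i0 with hRdef
    have hR : ∀ i, 0 < R i := fun i => div_pos (hp i).1 hp0
    have hpR : ∀ i, p i = R i * p i0 := by
      intro i; rw [hRdef]; field_simp
    have hqR : ∀ i, q i = R i * q i0 := by
      intro i
      by_cases hi : i = i0
      · subst hi; rw [hRdef]; field_simp
      · have h3 := h1' ⟨i, hi⟩
        simp only at h3
        rw [hRdef]; simp only [h3]; field_simp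
    have hpmem : ∀ i, R i * p i0 ∈ Set.Ioo (0:ℝ) 1 := fun i => (hpR i) ▸ hp i
    have hqmem : ∀ i, R i * q i0 ∈ Set.Ioo (0:ℝ) 1 := fun i => (hqR i) ▸ hq i
    have h2' : (∏ i, (R i * p i0) / (1 - R i * p i0)) = ∏ i, (R i * q i0) / (1 - R i * q i0) := by
      calc (∏ i, (R i * p i0) / (1 - R i * p i0)) = ∏ i, p i / (1 - p i) := by
            refine Finset.prod_congr rfl fun i _ => by rw [← hpR i]
        _ = ∏ i, q i / (1 - q i) := h2
        _ = ∏ i, (R i * q i0) / (1 - R i * q i0) := by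
            refine Finset.prod_congr rfl fun i _ => by rw [← hqR i]
    have heq : p i0 = q i0 := by
      rcases lt_trichotomy (p i0) (q i0) with hlt | heq | hlt
      · exact absurd h2' (ne_of_lt (F_lt_F R hR hpmem hqmem hlt))
      · exact heq
      · exact absurd h2'.symm (ne_of_lt (F_lt_F R hR hqmem hpmem hlt))
    funext i
    rw [hpR i, hqR i, heq]
  · -- SurjOn
    rintro ⟨r, t⟩ ⟨hr, ht⟩
    set R : I → ℝ := fun i => if h : i = i0 then 1 else r ⟨i, h⟩ with hRdef
    have hR : ∀ i, 0 < R i := by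
      intro i
      rw [hRdef]
      by_cases hi : i = i0
      · simp [hi]
      · simpa [hi] using hr ⟨i, hi⟩
    obtain ⟨s, hs, hF⟩ := key_exists R hR ht
    have hs0 : s ≠ 0 := by
      have h0 := (hs i0).1
      intro h; rw [h, mul_zero] at h0; exact lt_irrefl _ h0
    refine ⟨fun i => R i * s, fun i => hs i, ?_⟩
    have hRi0 : R i0 = 1 := by rw [hRdef]; simp
    simp only [Prod.mk.injEq]
    constructor
    · funext i
      have hRi : R i.1 = r i := by rw [hRdef]; simp [i.2]
      rw [hRi0, hRi, one_mul, mul_div_assoc, div_self hs0, mul_one]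
    · exact hF
end

section
/- Let I be a nonempty finite index set of cardinality n, let k = (k_i)_{i ∈ I} with k_i ∈ (0,1] for all i and k_j = 1 for some j ∈ I, and let c > 0. Then the function g(x) = ∑_{i ∈ I} log(k_i) + n·log(x) − ∑_{i ∈ I} log(1 − k_i·x) − log(c) has exactly one root in the open interval (0,1). -/
open Real Filter Set

/-- For a nonempty finite index set `I` of cardinality `n`, a vector `k` with
`k i ∈ (0,1]` for all `i` and `k j = 1` for some `j`, and `c > 0`, the function
`g(x) = ∑ i, log (k i) + n * log x - ∑ i, log (1 - k i * x) - log c` has exactly one root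
in the open interval `(0,1)`. -/
theorem stmt_3 {I : Type*} [Fintype I] [Nonempty I] (k : I → ℝ)
    (hk : ∀ i, k i ∈ Set.Ioc (0 : ℝ) 1) (j : I) (hj : k j = 1) (c : ℝ) (hc : 0 < c) :
    ∃! x : ℝ, x ∈ Set.Ioo (0 : ℝ) 1 ∧
      (∑ i : I, Real.log (k i)) + (Fintype.card I : ℝ) * Real.log x
        - (∑ i : I, Real.log (1 - k i * x)) - Real.log c = 0 := by
  classical
  set g : ℝ → ℝ := fun x => (∑ i : I, Real.log (k i)) + (Fintype.card I : ℝ) * Real.log x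
        - (∑ i : I, Real.log (1 - k i * x)) - Real.log c with hgdef
  have hn : (0:ℝ) < (Fintype.card I : ℝ) := by exact_mod_cast Fintype.card_pos
  have hpos : ∀ x ∈ Set.Ioo (0:ℝ) 1, ∀ i, 0 < 1 - k i * x := by
    intro x hx i
    nlinarith [(hk i).1, (hk i).2, hx.1, hx.2]
  -- strict monotonicity
  have hmono : StrictMonoOn g (Set.Ioo 0 1) := by
    intro x hx y hy hxy
    have h1 : Real.log x < Real.log y := Real.log_lt_log hx.1 hxy
    have hsum : ∑ i, Real.log (1 - k i * y) < ∑ i, Real.log (1 - k i * x) := by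
      apply Finset.sum_lt_sum_of_nonempty Finset.univ_nonempty
      intro i _
      apply Real.log_lt_log (hpos y hy i)
      nlinarith [(hk i).1]
    simp only [hgdef]
    nlinarith
  -- continuity
  have hcont : ContinuousOn g (Set.Ioo 0 1) := by
    intro x hx
    apply ContinuousAt.continuousWithinAt
    apply ContinuousAt.sub _ continuousAt_const
    apply ContinuousAt.sub
    · exact continuousAt_const.add
        (continuousAt_const.mul (Real.continuousAt_log (ne_of_gt hx.1)))
    · exact tendsto_finset_sum _ fun i _ =>
        ContinuousAt.log (by fun_prop) (ne_of_gt (hpos x hx i))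
  -- tendsto -∞ at 0+
  have h0 : Tendsto g (nhdsWithin 0 (Set.Ioi 0)) atBot := by
    have hlog : Tendsto (fun x => (Fintype.card I : ℝ) * Real.log x)
        (nhdsWithin 0 (Set.Ioi 0)) atBot :=
      (Real.tendsto_log_nhdsGT_zero).const_mul_atBot hn
    have hrest : Tendsto (fun x : ℝ => (∑ i : I, Real.log (k i))
        - (∑ i : I, Real.log (1 - k i * x)) - Real.log c)
        (nhdsWithin 0 (Set.Ioi 0))
        (nhds ((∑ i : I, Real.log (k i)) - (∑ i : I, Real.log (1 - k i * 0)) - Real.log c)) := by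
      apply Tendsto.mono_left _ nhdsWithin_le_nhds
      apply ContinuousAt.tendsto
      apply ContinuousAt.sub _ continuousAt_const
      apply ContinuousAt.sub continuousAt_const
      exact tendsto_finset_sum _ fun i _ =>
        ContinuousAt.log (by fun_prop) (by simp)
    have := hrest.add_atBot hlog
    apply this.congr
    intro x; simp only [hgdef]; ring
  -- tendsto +∞ at 1-
  have h1 : Tendsto g (nhdsWithin 1 (Set.Iio 1)) atTop := by
    have hla : Tendsto (fun x : ℝ => Real.log (1 - x)) (nhdsWithin 1 (Set.Iio 1)) atBot := by
      apply Real.tendsto_log_nhdsGT_zero.comp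
      have h1x : Tendsto (fun x : ℝ => 1 - x) (nhdsWithin 1 (Set.Iio 1)) (nhds 0) := by
        have : Tendsto (fun x : ℝ => 1 - x) (nhds 1) (nhds 0) := by
          have h := ((continuous_const (y := (1:ℝ))).sub continuous_id).tendsto (1:ℝ)
          simpa [Pi.sub_def] using h
        exact this.mono_left nhdsWithin_le_nhds
      rw [tendsto_nhdsWithin_iff]
      refine ⟨h1x, ?_⟩
      filter_upwards [self_mem_nhdsWithin] with x hx
      simp only [Set.mem_Iio] at hx
      simp only [Set.mem_Ioi]
      linarith
    have hla' : Tendsto (fun x : ℝ => -Real.log (1 - x)) (nhdsWithin 1 (Set.Iio 1)) atTop := by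
      rwa [tendsto_neg_atTop_iff]
    have hlog1 : Tendsto (fun x : ℝ => (∑ i : I, Real.log (k i))
        + (Fintype.card I : ℝ) * Real.log x - Real.log c)
        (nhdsWithin 1 (Set.Iio 1))
        (nhds ((∑ i : I, Real.log (k i)) + (Fintype.card I : ℝ) * Real.log 1 - Real.log c)) := by
      apply Tendsto.mono_left _ nhdsWithin_le_nhds
      exact (continuousAt_const.add
        (continuousAt_const.mul (Real.continuousAt_log one_ne_zero))).sub continuousAt_const
    have hbig : Tendsto (fun x : ℝ => (∑ i : I, Real.log (k i))
        + (Fintype.card I : ℝ) * Real.log x - Real.log c - Real.log (1 - x))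
        (nhdsWithin 1 (Set.Iio 1)) atTop := by
      have := hlog1.add_atTop hla'
      apply this.congr
      intro x; ring
    have hlb : ∀ x ∈ Set.Ioo (0:ℝ) 1,
        (∑ i : I, Real.log (k i)) + (Fintype.card I : ℝ) * Real.log x - Real.log c
          - Real.log (1 - x) ≤ g x := by
      intro x hx
      have hsle : ∑ i : I, Real.log (1 - k i * x) ≤ Real.log (1 - x) := by
        have heq : Real.log (1 - k j * x) + ∑ i ∈ Finset.univ.erase j, Real.log (1 - k i * x)
            = ∑ i : I, Real.log (1 - k i * x) :=
          Finset.add_sum_erase _ (fun i => Real.log (1 - k i * x)) (Finset.mem_univ j)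
        have hrest : ∑ i ∈ Finset.univ.erase j, Real.log (1 - k i * x) ≤ 0 := by
          apply Finset.sum_nonpos
          intro i _
          apply Real.log_nonpos (hpos x hx i).le
          nlinarith [(hk i).1, hx.1]
        have := heq ▸ (add_le_add_right hrest (Real.log (1 - k j * x)))
        simp only [add_zero] at this
        calc ∑ i : I, Real.log (1 - k i * x) ≤ Real.log (1 - k j * x) := by linarith
          _ = Real.log (1 - x) := by rw [hj, one_mul]
      simp only [hgdef]
      linarith
    apply tendsto_atTop_mono' _ _ hbig
    filter_upwards [Ioo_mem_nhdsLT_of_mem (by constructor <;> norm_num : (1:ℝ) ∈ Set.Ioc 0 1)]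
      with x hx
    exact hlb x hx
  -- get a with g a < 0
  obtain ⟨a, ha0, hga⟩ : ∃ a, a ∈ Set.Ioo (0:ℝ) 1 ∧ g a < 0 := by
    have he : ∀ᶠ x in nhdsWithin 0 (Set.Ioi 0), g x < 0 := h0.eventually (eventually_lt_atBot 0)
    have hm : Set.Ioo (0:ℝ) 1 ∈ nhdsWithin 0 (Set.Ioi 0) :=
      Ioo_mem_nhdsGT_of_mem (by constructor <;> norm_num)
    rcases (he.and (eventually_of_mem hm (fun x hx => hx))).exists with ⟨a, h1a, h2a⟩
    exact ⟨a, h2a, h1a⟩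
  obtain ⟨b, hb0, hgb⟩ : ∃ b, b ∈ Set.Ioo (0:ℝ) 1 ∧ 0 < g b := by
    have he : ∀ᶠ x in nhdsWithin 1 (Set.Iio 1), 0 < g x := h1.eventually (eventually_gt_atTop 0)
    have hm : Set.Ioo (0:ℝ) 1 ∈ nhdsWithin 1 (Set.Iio 1) :=
      Ioo_mem_nhdsLT_of_mem (by constructor <;> norm_num)
    rcases (he.and (eventually_of_mem hm (fun x hx => hx))).exists with ⟨b, h1b, h2b⟩
    exact ⟨b, h2b, h1b⟩
  have hab : a < b := by
    by_contra h
    push_neg at h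
    have := hmono.monotoneOn hb0 ha0 h
    linarith
  have hsub : Set.Icc a b ⊆ Set.Ioo (0:ℝ) 1 := fun x hx => ⟨lt_of_lt_of_le ha0.1 hx.1,
    lt_of_le_of_lt hx.2 hb0.2⟩
  obtain ⟨x, hxab, hgx⟩ := intermediate_value_Icc hab.le (hcont.mono hsub)
    (⟨hga.le, hgb.le⟩ : (0:ℝ) ∈ Set.Icc (g a) (g b))
  refine ⟨x, ⟨hsub hxab, hgx⟩, ?_⟩
  intro y hy
  exact hmono.injOn hy.1 (hsub hxab) (hy.2.trans hgx.symm)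
end

section
/- Let p = (p_{a0,l1,a1}) ∈ (0,1)^8 be indexed by (a0,l1,a1) ∈ {0,1}^3 and let η = (η0, η1) ∈ (0,1)^2. Define the additive blip parameters β* = [η1·p_{1,1,0} + (1 − η1)·p_{1,0,0}] − [η0·p_{0,1,0} + (1 − η0)·p_{0,0,0}] and β(a0,l1) = p_{a0,l1,1} − p_{a0,l1,0}. Then β* + η1·β(1,1) + (1 − η1)·β(1,0) ∈ (−1,1) for every such (p, η); in particular, there is no (p, η) ∈ (0,1)^8 × (0,1)^2 with β* = 9/10, β(1,1) = 9/10 and β(1,0) = 9/10, so the range of the parameter vector (β*, β(1,1), β(1,0), β(0,1), β(0,0)) over all (p, η) is a proper subset of (−1,1)^5. -/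
lemma combo_mem {η x y : ℝ} (hη : η ∈ Set.Ioo (0:ℝ) 1) (hx : x ∈ Set.Ioo (0:ℝ) 1)
    (hy : y ∈ Set.Ioo (0:ℝ) 1) : η * x + (1 - η) * y ∈ Set.Ioo (0:ℝ) 1 := by
  obtain ⟨h1, h2⟩ := hη; obtain ⟨h3, h4⟩ := hx; obtain ⟨h5, h6⟩ := hy
  constructor <;> nlinarith

lemma key_mem (pη : (Bool → Bool → Bool → ℝ) × (Bool → ℝ))
    (hp : ∀ a0 l1 a1, pη.1 a0 l1 a1 ∈ Set.Ioo (0 : ℝ) 1)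
    (hη : ∀ b, pη.2 b ∈ Set.Ioo (0 : ℝ) 1) :
    ((pη.2 true * pη.1 true true false + (1 - pη.2 true) * pη.1 true false false)
        - (pη.2 false * pη.1 false true false
            + (1 - pη.2 false) * pη.1 false false false))
      + pη.2 true * (pη.1 true true true - pη.1 true true false)
      + (1 - pη.2 true) * (pη.1 true false true - pη.1 true false false)
      ∈ Set.Ioo (-1 : ℝ) 1 := by
  have h1 := combo_mem (hη true) (hp true true true) (hp true false true)
  have h0 := combo_mem (hη false) (hp false true false) (hp false false false)
  obtain ⟨a, b⟩ := h1; obtain ⟨c, d⟩ := h0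
  constructor <;> nlinarith

theorem stmt_8 :
    (∀ pη : (Bool → Bool → Bool → ℝ) × (Bool → ℝ),
      ((∀ a0 l1 a1, pη.1 a0 l1 a1 ∈ Set.Ioo (0 : ℝ) 1) ∧
        (∀ b, pη.2 b ∈ Set.Ioo (0 : ℝ) 1)) →
      ((pη.2 true * pη.1 true true false + (1 - pη.2 true) * pη.1 true false false)
          - (pη.2 false * pη.1 false true false
              + (1 - pη.2 false) * pη.1 false false false))
        + pη.2 true * (pη.1 true true true - pη.1 true true false)
        + (1 - pη.2 true) * (pη.1 true false true - pη.1 true false false)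
        ∈ Set.Ioo (-1 : ℝ) 1) ∧
    (¬ ∃ pη : (Bool → Bool → Bool → ℝ) × (Bool → ℝ),
      ((∀ a0 l1 a1, pη.1 a0 l1 a1 ∈ Set.Ioo (0 : ℝ) 1) ∧
        (∀ b, pη.2 b ∈ Set.Ioo (0 : ℝ) 1)) ∧
      ((pη.2 true * pη.1 true true false + (1 - pη.2 true) * pη.1 true false false)
          - (pη.2 false * pη.1 false true false
              + (1 - pη.2 false) * pη.1 false false false)) = 9 / 10 ∧
      pη.1 true true true - pη.1 true true false = 9 / 10 ∧
      pη.1 true false true - pη.1 true false false = 9 / 10) ∧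
    ((fun pη : (Bool → Bool → Bool → ℝ) × (Bool → ℝ) =>
        (![(pη.2 true * pη.1 true true false + (1 - pη.2 true) * pη.1 true false false)
            - (pη.2 false * pη.1 false true false
                + (1 - pη.2 false) * pη.1 false false false),
          pη.1 true true true - pη.1 true true false,
          pη.1 true false true - pη.1 true false false,
          pη.1 false true true - pη.1 false true false,
          pη.1 false false true - pη.1 false false false] : Fin 5 → ℝ)) ''
      {pη : (Bool → Bool → Bool → ℝ) × (Bool → ℝ) |
        (∀ a0 l1 a1, pη.1 a0 l1 a1 ∈ Set.Ioo (0 : ℝ) 1) ∧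
        (∀ b, pη.2 b ∈ Set.Ioo (0 : ℝ) 1)}
      ⊂ {v : Fin 5 → ℝ | ∀ i, v i ∈ Set.Ioo (-1 : ℝ) 1}) := by
  have nine : ∀ pη : (Bool → Bool → Bool → ℝ) × (Bool → ℝ),
      ((∀ a0 l1 a1, pη.1 a0 l1 a1 ∈ Set.Ioo (0 : ℝ) 1) ∧
        (∀ b, pη.2 b ∈ Set.Ioo (0 : ℝ) 1)) →
      ¬ (((pη.2 true * pη.1 true true false + (1 - pη.2 true) * pη.1 true false false)
          - (pη.2 false * pη.1 false true false
              + (1 - pη.2 false) * pη.1 false false false)) = 9 / 10 ∧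
      pη.1 true true true - pη.1 true true false = 9 / 10 ∧
      pη.1 true false true - pη.1 true false false = 9 / 10) := by
    rintro pη ⟨hp, hη⟩ ⟨h1, h2, h3⟩
    have hk := key_mem pη hp hη
    rw [h1, h2, h3] at hk
    obtain ⟨_, hk2⟩ := hk
    linarith
  refine ⟨fun pη h => key_mem pη h.1 h.2, ?_, ?_, ?_⟩
  · rintro ⟨pη, h, h1, h2, h3⟩
    exact nine pη h ⟨h1, h2, h3⟩
  · rintro v ⟨pη, ⟨hp, hη⟩, rfl⟩ i
    have c1 := combo_mem (hη true) (hp true true false) (hp true false false)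
    have c0 := combo_mem (hη false) (hp false true false) (hp false false false)
    obtain ⟨a1, b1⟩ := c1; obtain ⟨a0, b0⟩ := c0
    have h0 : (pη.2 true * pη.1 true true false + (1 - pη.2 true) * pη.1 true false false)
        - (pη.2 false * pη.1 false true false
            + (1 - pη.2 false) * pη.1 false false false) ∈ Set.Ioo (-1:ℝ) 1 :=
      ⟨by linarith, by linarith⟩
    have hd : ∀ a0 l1, pη.1 a0 l1 true - pη.1 a0 l1 false ∈ Set.Ioo (-1:ℝ) 1 := by
      intro a0 l1
      obtain ⟨x1, x2⟩ := hp a0 l1 true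
      obtain ⟨y1, y2⟩ := hp a0 l1 false
      exact ⟨by linarith, by linarith⟩
    have h1 := hd true true
    have h2 := hd true false
    have h3 := hd false true
    have h4 := hd false false
    obtain ⟨u0, v0⟩ := h0; obtain ⟨u1, v1⟩ := h1; obtain ⟨u2, v2⟩ := h2
    obtain ⟨u3, v3⟩ := h3; obtain ⟨u4, v4⟩ := h4
    fin_cases i <;> constructor <;> simp <;> linarith
  · intro hsup
    have hmem : (fun _ : Fin 5 => (9:ℝ)/10) ∈
        {v : Fin 5 → ℝ | ∀ i, v i ∈ Set.Ioo (-1 : ℝ) 1} := by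
      intro i; constructor <;> norm_num
    obtain ⟨pη, h, heq⟩ := hsup hmem
    have e0 := congrFun heq 0
    have e1 := congrFun heq 1
    have e2 := congrFun heq 2
    simp [Matrix.cons_val_zero, Matrix.cons_val_one] at e0 e1 e2
    exact nine pη h ⟨e0, e1, e2⟩
end

section
/- Let θ(a0,l1), φ(a0), and θ* be defined from (p, η) ∈ (0,1)^8 × (0,1)^2 by θ(a0,l1) = p_{a0,l1,1}/p_{a0,l1,0}, φ(a0) = p_{a0,1,0}/p_{a0,0,0}, and θ* = [(η1·φ(1) + 1 − η1)/(η0·φ(0) + 1 − η0)] · (p_{1,0,0}/p_{0,0,0}), where p = (p_{a0,l1,a1}) is indexed by (a0,l1,a1) ∈ {0,1}^3. Then for every (s, t11, t10, t01, t00) ∈ (0,∞)^5 and every (η0, η1) ∈ (0,1)^2 there exists p ∈ (0,1)^8 such that θ* = s and θ(a0,l1) = t_{a0,l1} for all (a0,l1) ∈ {0,1}^2. -/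
/-- multiplicative part of Proposition 1, K = 1: With `p ∈ (0,1)^8` indexed
by `(a0,l1,a1) ∈ {0,1}³` (encoded by `Bool`, `false = 0`, `true = 1`), define
`θ(a0,l1) = p_{a0,l1,1}/p_{a0,l1,0}`, `φ(a0) = p_{a0,1,0}/p_{a0,0,0}`, and
`θ* = [(η1·φ(1) + 1 - η1)/(η0·φ(0) + 1 - η0)] · (p_{1,0,0}/p_{0,0,0})`.  For every
`(s, t11, t10, t01, t00) ∈ (0,∞)^5` and every `(η0, η1) ∈ (0,1)²` there exists
`p ∈ (0,1)^8` with `θ* = s` and `θ(a0,l1) = t_{a0,l1}` for all `(a0,l1)`. -/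
theorem stmt_9 (s t11 t10 t01 t00 : ℝ) (hs : 0 < s) (ht11 : 0 < t11) (ht10 : 0 < t10)
    (ht01 : 0 < t01) (ht00 : 0 < t00) (η0 η1 : ℝ) (hη0 : η0 ∈ Set.Ioo (0 : ℝ) 1)
    (hη1 : η1 ∈ Set.Ioo (0 : ℝ) 1) :
    ∃ p : Bool → Bool → Bool → ℝ,
      (∀ a0 l1 a1, p a0 l1 a1 ∈ Set.Ioo (0 : ℝ) 1) ∧
      ((η1 * (p true true false / p true false false) + 1 - η1) /
          (η0 * (p false true false / p false false false) + 1 - η0)) *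
        (p true false false / p false false false) = s ∧
      p true true true / p true true false = t11 ∧
      p true false true / p true false false = t10 ∧
      p false true true / p false true false = t01 ∧
      p false false true / p false false false = t00 := by
  set D : ℝ := 1 + s + s * t11 + s * t10 + t01 + t00 with hD
  have hDpos : 0 < D := by positivity
  set ε : ℝ := 1 / (2 * D) with hε
  have hεpos : 0 < ε := by positivity
  have key : ∀ c : ℝ, 0 < c → c ≤ D → c * ε ∈ Set.Ioo (0 : ℝ) 1 := by
    intro c hc hcD
    refine ⟨by positivity, ?_⟩
    rw [hε, mul_one_div, div_lt_one (by positivity)]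
    nlinarith
  refine ⟨fun a0 l1 a1 =>
    (if a0 then s else 1) *
      (if a1 then (if a0 then (if l1 then t11 else t10) else (if l1 then t01 else t00)) else 1) *
      ε, ?_, ?_, ?_, ?_, ?_, ?_⟩
  · intro a0 l1 a1
    cases a0 <;> cases l1 <;> cases a1
    · simpa using key 1 one_pos (by nlinarith)
    · simpa [mul_assoc] using key t00 ht00 (by nlinarith)
    · simpa using key 1 one_pos (by nlinarith)
    · simpa [mul_assoc] using key t01 ht01 (by nlinarith)
    · simpa using key s hs (by nlinarith)
    · simpa [mul_assoc] using key (s * t10) (by positivity) (by nlinarith)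
    · simpa using key s hs (by nlinarith)
    · simpa [mul_assoc] using key (s * t11) (by positivity) (by nlinarith)
  all_goals
    simp [div_self (ne_of_gt hεpos), div_self (ne_of_gt hs),
      mul_div_mul_right _ _ (ne_of_gt hεpos), mul_div_assoc, add_sub_cancel_left]
  all_goals
    rw [mul_div_assoc']
    field_simp
end

section
/- The map sending (p1, p0) ∈ (0,1)^2 to (p1 − p0, p0·p1/((1 − p0)·(1 − p1))) is a bijection from (0,1)^2 onto (−1,1) × (0,∞). -/
open Filter Topology Set

private lemma odds_lt {x y : ℝ} (hx0 : 0 < x) (hx1 : x < 1) (hy1 : y < 1) (hxy : x < y) :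
    x / (1 - x) < y / (1 - y) := by
  rw [div_lt_div_iff₀ (by linarith) (by linarith)]
  nlinarith

private lemma op_lt {p0 p1 q0 q1 : ℝ} (hp0 : 0 < p0) (hp0' : p0 < 1) (hp1 : 0 < p1)
    (hp1' : p1 < 1) (hq0' : q0 < 1) (hq1' : q1 < 1) (h0 : p0 < q0) (h1 : p1 < q1) :
    p0 * p1 / ((1 - p0) * (1 - p1)) < q0 * q1 / ((1 - q0) * (1 - q1)) := by
  rw [← div_mul_div_comm, ← div_mul_div_comm]
  exact mul_lt_mul'' (odds_lt hp0 hp0' hq0' h0) (odds_lt hp1 hp1' hq1' h1)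
    (div_nonneg hp0.le (by linarith)) (div_nonneg hp1.le (by linarith))

/-- The map `(p1, p0) ↦ (p1 - p0, p0·p1 / ((1-p0)·(1-p1)))` is a bijection
from `(0,1)²` onto `(-1,1) × (0,∞)`. -/
theorem stmt_10 :
    Set.BijOn
      (fun q : ℝ × ℝ => ((q.1 - q.2, q.2 * q.1 / ((1 - q.2) * (1 - q.1))) : ℝ × ℝ))
      (Set.Ioo (0 : ℝ) 1 ×ˢ Set.Ioo (0 : ℝ) 1)
      (Set.Ioo (-1 : ℝ) 1 ×ˢ Set.Ioi (0 : ℝ)) := by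
  refine ⟨?_, ?_, ?_⟩
  · rintro ⟨p1, p0⟩ ⟨⟨h1a, h1b⟩, h0a, h0b⟩
    refine ⟨⟨by dsimp; linarith, by dsimp; linarith⟩, ?_⟩
    exact div_pos (mul_pos h0a h1a) (mul_pos (by linarith) (by linarith))
  · rintro ⟨p1, p0⟩ ⟨⟨h1a, h1b⟩, h0a, h0b⟩ ⟨q1, q0⟩ ⟨⟨g1a, g1b⟩, g0a, g0b⟩ heq
    simp only [Prod.mk.injEq] at heq
    obtain ⟨e1, e2⟩ := heq
    rcases lt_trichotomy p1 q1 with hlt | heq' | hgt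
    · exact absurd e2 (ne_of_lt (op_lt h0a h0b h1a h1b g0b g1b (by linarith) hlt))
    · exact Prod.ext heq' (by linarith)
    · exact absurd e2.symm (ne_of_lt (op_lt g0a g0b g1a g1b h0b h1b (by linarith) hgt))
  · rintro ⟨d, o⟩ ⟨⟨hd1, hd2⟩, ho⟩
    simp only [mem_Ioi] at ho
    set a : ℝ := max 0 d with ha_def
    set b : ℝ := min 1 (1 + d) with hb_def
    have hab : a < b := max_lt (lt_min one_pos (by linarith)) (lt_min hd2 (by linarith))
    have hb1 : b ≤ 1 := min_le_left _ _
    have hbd : b ≤ 1 + d := min_le_right _ _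
    have ha0 : 0 ≤ a := le_max_left _ _
    have had : d ≤ a := le_max_right _ _
    set N : ℝ → ℝ := fun t => (t - d) * t with hN_def
    set D : ℝ → ℝ := fun t => (1 - (t - d)) * (1 - t) with hD_def
    set h : ℝ → ℝ := fun t => N t / D t with hh_def
    have hDpos : ∀ t ∈ Ioo a b, 0 < D t := by
      rintro t ⟨hta, htb⟩
      show (0:ℝ) < (1 - (t - d)) * (1 - t)
      exact mul_pos (by linarith) (by linarith)
    have hbounds : ∀ t ∈ Ioo a b, 0 < t ∧ t < 1 ∧ 0 < t - d ∧ t - d < 1 := by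
      rintro t ⟨hta, htb⟩
      exact ⟨by linarith, by linarith, by linarith, by linarith⟩
    have hmono : ∀ s ∈ Ioo a b, ∀ t ∈ Ioo a b, s < t → h s < h t := by
      intro s hs t ht hst
      obtain ⟨s0, s1, s2, s3⟩ := hbounds s hs
      obtain ⟨t0, t1, t2, t3⟩ := hbounds t ht
      exact op_lt s2 s3 s0 s1 t3 t1 (by linarith) hst
    have hc : ∀ t : ℝ, D t ≠ 0 → ContinuousAt h t := by
      intro t ht
      exact ContinuousAt.div (by fun_prop) (by fun_prop) ht
    -- behavior at a
    have ha1 : a < 1 := lt_of_lt_of_le hab hb1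
    have had1 : a - d < 1 := by have := lt_of_lt_of_le hab hbd; linarith
    have hDa : 0 < D a := by
      show (0:ℝ) < (1 - (a - d)) * (1 - a)
      exact mul_pos (by linarith) (by linarith)
    have hNa : N a = 0 := by
      rcases max_cases 0 d with ⟨h1, _⟩ | ⟨h1, _⟩ <;> simp only [hN_def, ha_def, h1] <;> ring
    have hha : h a = 0 := by simp [hh_def, hNa]
    have hta : Tendsto h (𝓝[Ioo a b] a) (𝓝 0) := by
      have := (hc a hDa.ne').tendsto
      rw [hha] at this
      exact this.mono_left nhdsWithin_le_nhds
    have hne_a : (𝓝[Ioo a b] a).NeBot := left_nhdsWithin_Ioo_neBot hab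
    obtain ⟨t1, ht1o, ht1m⟩ := ((hta.eventually_lt_const ho).and eventually_mem_nhdsWithin).exists
    -- behavior at b
    have hNb : 0 < N b := by
      show (0:ℝ) < (b - d) * b
      exact mul_pos (by linarith) (by linarith)
    have hDb : D b = 0 := by
      rcases min_cases 1 (1 + d) with ⟨h1, _⟩ | ⟨h1, _⟩ <;> simp only [hD_def, hb_def, h1] <;> ring
    have htDb : Tendsto D (𝓝[Ioo a b] b) (𝓝[>] 0) := by
      rw [tendsto_nhdsWithin_iff]
      constructor
      · have : Tendsto D (𝓝 b) (𝓝 (D b)) := (by fun_prop : Continuous D).continuousAt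
        rw [hDb] at this
        exact this.mono_left nhdsWithin_le_nhds
      · exact eventually_mem_nhdsWithin.mono fun t ht => hDpos t ht
    have htb : Tendsto h (𝓝[Ioo a b] b) atTop := by
      have hNt : Tendsto N (𝓝[Ioo a b] b) (𝓝 (N b)) :=
        ((by fun_prop : Continuous N).continuousAt).tendsto.mono_left nhdsWithin_le_nhds
      have := Filter.Tendsto.pos_mul_atTop hNb hNt htDb.inv_tendsto_nhdsGT_zero
      refine this.congr fun t => ?_
      simp [hh_def, div_eq_mul_inv]
    have hne_b : (𝓝[Ioo a b] b).NeBot := right_nhdsWithin_Ioo_neBot hab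
    obtain ⟨t2, ht2o, ht2m⟩ := ((htb.eventually_gt_atTop o).and eventually_mem_nhdsWithin).exists
    have ht12 : t1 < t2 := by
      rcases lt_trichotomy t1 t2 with h' | h' | h'
      · exact h'
      · rw [h'] at ht1o; linarith
      · have := hmono t2 ht2m t1 ht1m h'; linarith
    have hsub : Icc t1 t2 ⊆ Ioo a b := Icc_subset_Ioo ht1m.1 ht2m.2
    have hconti : ContinuousOn h (Icc t1 t2) := fun t ht =>
      (hc t (hDpos t (hsub ht)).ne').continuousWithinAt
    obtain ⟨t, htm, hto⟩ := intermediate_value_Icc ht12.le hconti ⟨ht1o.le, ht2o.le⟩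
    have htI : t ∈ Ioo a b := hsub htm
    obtain ⟨tb0, tb1, tb2, tb3⟩ := hbounds t htI
    refine ⟨(t, t - d), ⟨⟨tb0, tb1⟩, ⟨tb2, tb3⟩⟩, ?_⟩
    simp only [Prod.mk.injEq]
    exact ⟨by ring, hto⟩
end

section
/- The map sending (p1, p0) ∈ (0,1)^2 to (p1/p0, p0·p1/((1 − p0)·(1 − p1))) is a bijection from (0,1)^2 onto (0,∞) × (0,∞). -/
/-- The map `(p1, p0) ↦ (p1 / p0, p0·p1 / ((1-p0)·(1-p1)))` is a bijection
from `(0,1)²` onto `(0,∞) × (0,∞)`. -/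
theorem stmt_11 :
    Set.BijOn
      (fun q : ℝ × ℝ => ((q.1 / q.2, q.2 * q.1 / ((1 - q.2) * (1 - q.1))) : ℝ × ℝ))
      (Set.Ioo (0 : ℝ) 1 ×ˢ Set.Ioo (0 : ℝ) 1)
      (Set.Ioi (0 : ℝ) ×ˢ Set.Ioi (0 : ℝ)) := by
  refine ⟨?_, ?_, ?_⟩
  · rintro ⟨p1, p0⟩ ⟨⟨h1, h2⟩, ⟨h3, h4⟩⟩
    constructor
    · exact div_pos h1 h3
    · exact div_pos (mul_pos h3 h1) (mul_pos (by linarith) (by linarith))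
  · rintro ⟨p1, p0⟩ ⟨⟨hp1, hp2⟩, ⟨hp3, hp4⟩⟩ ⟨q1, q0⟩ ⟨⟨hq1, hq2⟩, ⟨hq3, hq4⟩⟩ heq
    simp only [Prod.mk.injEq] at heq
    obtain ⟨h1, h2⟩ := heq
    have hc : p1 * q0 = q1 * p0 := by
      field_simp at h1; linarith
    have hden : p0 * p1 * ((1 - q0) * (1 - q1)) = q0 * q1 * ((1 - p0) * (1 - p1)) := by
      rw [div_eq_div_iff (by nlinarith) (by nlinarith)] at h2
      linarith
    have key : ∀ a1 a0 b1 b0 : ℝ, 0 < a1 → a1 < 1 → 0 < a0 → a0 < 1 →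
        0 < b1 → b1 < 1 → 0 < b0 → b0 < 1 → a1 * b0 = b1 * a0 → a0 < b0 →
        a0 * a1 * ((1 - b0) * (1 - b1)) < b0 * b1 * ((1 - a0) * (1 - a1)) := by
      intro a1 a0 b1 b0 ha1 ha2 ha3 ha4 hb1 hb2 hb3 hb4 hc hlt
      have h1 : a1 < b1 := by
        nlinarith
      have hX : 0 < (1 - b0) * (1 - b1) :=
        mul_pos (by linarith) (by linarith)
      have hprod : a0 * a1 < b0 * b1 := by nlinarith
      have hY : (1 - b0) * (1 - b1) < (1 - a0) * (1 - a1) := by nlinarith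
      calc a0 * a1 * ((1 - b0) * (1 - b1))
          < b0 * b1 * ((1 - b0) * (1 - b1)) := by
            exact mul_lt_mul_of_pos_right hprod hX
        _ < b0 * b1 * ((1 - a0) * (1 - a1)) := by
            exact mul_lt_mul_of_pos_left hY (mul_pos hb3 hb1)
    have h00 : p0 = q0 := by
      rcases lt_trichotomy p0 q0 with h | h | h
      · exact absurd hden (ne_of_lt (key p1 p0 q1 q0 hp1 hp2 hp3 hp4 hq1 hq2 hq3 hq4 hc h))
      · exact h
      · exact absurd hden (ne_of_gt (key q1 q0 p1 p0 hq1 hq2 hq3 hq4 hp1 hp2 hp3 hp4 hc.symm h))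
    have h11 : p1 = q1 := by
      rw [h00] at hc
      exact mul_right_cancel₀ (ne_of_gt hq3) hc
    simp [h00, h11]
  · rintro ⟨r, o⟩ ⟨hr, ho⟩
    simp only [Set.mem_Ioi] at hr ho
    set s := Real.sqrt (o ^ 2 * (1 - r) ^ 2 + 4 * r * o) with hs
    have harg : 0 < o ^ 2 * (1 - r) ^ 2 + 4 * r * o := by positivity
    have hspos : 0 < s := Real.sqrt_pos.mpr harg
    have hs2 : s ^ 2 = o ^ 2 * (1 - r) ^ 2 + 4 * r * o := Real.sq_sqrt harg.le
    set d := o * (1 + r) + s with hd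
    have hdpos : 0 < d := by nlinarith
    have hkey1 : o * (1 - r) < s := by nlinarith [sq_nonneg (s - o * (1 - r))]
    have hkey2 : o * (r - 1) < s := by nlinarith [sq_nonneg (s - o * (r - 1))]
    have hp0 : 0 < 2 * o / d := by positivity
    have hp0' : 2 * o / d < 1 := by
      rw [div_lt_one hdpos]; nlinarith
    have hp1 : 0 < 2 * r * o / d := by positivity
    have hp1' : 2 * r * o / d < 1 := by
      rw [div_lt_one hdpos]; nlinarith
    refine ⟨(2 * r * o / d, 2 * o / d), ⟨⟨hp1, hp1'⟩, ⟨hp0, hp0'⟩⟩, ?_⟩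
    have hdne : d ≠ 0 := ne_of_gt hdpos
    simp only [Prod.mk.injEq]
    constructor
    · field_simp
    · have hne1 : (1 : ℝ) - 2 * o / d ≠ 0 := by linarith
      have hne2 : (1 : ℝ) - 2 * r * o / d ≠ 0 := by linarith
      rw [div_eq_iff (by positivity : ((1 - 2 * o / d) * (1 - 2 * r * o / d)) ≠ 0)]
      field_simp
      rw [hd]
      linear_combination (-1) * hs2
end
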